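/- Let c1, c2 > 0 and write w(r) = log(1/r). Define f(r) = r·(1 − c1/w(r)) and u(r) = −c2·log(w(r)) for r ∈ (0, R), where 0 < R < min{1/e, e^{−c1}} (so that w(r) > max{1, c1} and f(r) > 0 on (0,R)). Then for every r ∈ (0, R) one has the identity 2·e^{2u(r)}·( −f''(r)/f(r) − u'(r)² ) = (2 / (r²·w(r)^{2+2c2}))·[ c1(c1+2)/(w(r) − c1) + c1 − c2² ]. Moreover, if in addition c1 ≥ c2², then this quantity is strictly positive for every r ∈ (0, R). -/

import Mathlib

/-- Explicit scalar curvature identity for the model drawstring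
metric `g = e^{-2u}(dr² + f² dθ²) + e^{2u} dt²` with
`f(r) = r(1 - c1/log(1/r))`, `u(r) = -c2 log(log(1/r))`, together with
positivity when `c1 ≥ c2²`. -/
theorem stmt_0 (c1 c2 R : ℝ) (hc1 : 0 < c1) (hc2 : 0 < c2)
    (hR0 : 0 < R) (hR : R < min (Real.exp (-1)) (Real.exp (-c1)))
    (w f u : ℝ → ℝ)
    (hw : ∀ r, w r = Real.log (1 / r))
    (hf : ∀ r, f r = r * (1 - c1 / w r))
    (hu : ∀ r, u r = -c2 * Real.log (w r)) :
    (∀ r ∈ Set.Ioo (0 : ℝ) R,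
      2 * Real.exp (2 * u r) * (-(deriv (deriv f) r) / f r - (deriv u r) ^ 2)
        = (2 / (r ^ 2 * w r ^ (2 + 2 * c2))) *
            (c1 * (c1 + 2) / (w r - c1) + c1 - c2 ^ 2)) ∧
    (c1 ≥ c2 ^ 2 → ∀ r ∈ Set.Ioo (0 : ℝ) R,
      0 < 2 * Real.exp (2 * u r) * (-(deriv (deriv f) r) / f r - (deriv u r) ^ 2)) := by
  have hwneg : ∀ r : ℝ, w r = -Real.log r := by
    intro r; rw [hw, one_div, Real.log_inv]
  have hRe : R < Real.exp (-1) := lt_of_lt_of_le hR (min_le_left _ _)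
  have hRc : R < Real.exp (-c1) := lt_of_lt_of_le hR (min_le_right _ _)
  have hfacts : ∀ r ∈ Set.Ioo (0:ℝ) R, Real.log r < -1 ∧ Real.log r < -c1 := by
    intro r hr
    constructor
    · calc Real.log r < Real.log (Real.exp (-1)) :=
            Real.log_lt_log hr.1 (hr.2.trans hRe)
        _ = -1 := Real.log_exp _
    · calc Real.log r < Real.log (Real.exp (-c1)) :=
            Real.log_lt_log hr.1 (hr.2.trans hRc)
        _ = -c1 := Real.log_exp _
  have hfe : f = fun x => x * (1 + c1 / Real.log x) := by
    funext x; rw [hf, hwneg, div_neg]; ring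
  have hue : u = fun x => -c2 * Real.log (-Real.log x) := by
    funext x; rw [hu, hwneg]
  -- first derivative of f
  have hDf : ∀ r ∈ Set.Ioo (0:ℝ) R,
      HasDerivAt f (1 + c1 * (Real.log r - 1) / (Real.log r)^2) r := by
    intro r hr
    obtain ⟨h1, _⟩ := hfacts r hr
    have hr0 : (0:ℝ) < r := hr.1
    have hl0 : Real.log r ≠ 0 := by nlinarith
    have hlog := Real.hasDerivAt_log hr0.ne'
    have h : HasDerivAt (fun x => x * (1 + c1 / Real.log x))
        (1 * (1 + c1 / Real.log r) + r * ((0 * Real.log r - c1 * r⁻¹) / Real.log r ^ 2)) r :=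
      (hasDerivAt_id r).mul
      (((hasDerivAt_const r c1).div hlog hl0).const_add 1)
    rw [hfe]
    convert h using 1
    field_simp
    ring
  have hdf : ∀ r ∈ Set.Ioo (0:ℝ) R,
      deriv f r = 1 + c1 * (Real.log r - 1) / (Real.log r)^2 :=
    fun r hr => (hDf r hr).deriv
  -- second derivative of f
  have hd2f : ∀ r ∈ Set.Ioo (0:ℝ) R,
      deriv (deriv f) r = c1 * (2 - Real.log r) / (r * (Real.log r)^3) := by
    intro r hr
    obtain ⟨h1, _⟩ := hfacts r hr
    have hr0 : (0:ℝ) < r := hr.1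
    have hl0 : Real.log r ≠ 0 := by nlinarith
    have hl20 : (Real.log r)^2 ≠ 0 := pow_ne_zero _ hl0
    have hlog := Real.hasDerivAt_log hr0.ne'
    have hev : deriv f =ᶠ[nhds r]
        fun x => 1 + c1 * (Real.log x - 1) / (Real.log x)^2 := by
      filter_upwards [isOpen_Ioo.mem_nhds hr] with x hx using hdf x hx
    rw [hev.deriv_eq]
    have h := ((((hlog.sub_const 1).div (hlog.pow 2) hl20).const_mul
      c1).const_add 1).deriv
    simp only [mul_div_assoc]
    refine h.trans ?_
    simp only [Pi.pow_apply]
    field_simp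
    ring
  -- derivative of u
  have hdu : ∀ r ∈ Set.Ioo (0:ℝ) R,
      deriv u r = -c2 / (r * Real.log r) := by
    intro r hr
    obtain ⟨h1, _⟩ := hfacts r hr
    have hr0 : (0:ℝ) < r := hr.1
    have hl0 : Real.log r ≠ 0 := by nlinarith
    have hlog := Real.hasDerivAt_log hr0.ne'
    have hW : (0:ℝ) < -Real.log r := by linarith
    have hcomp := ((Real.hasDerivAt_log hW.ne').comp r hlog.neg).const_mul (-c2)
    have : HasDerivAt u (-c2 * ((-Real.log r)⁻¹ * -r⁻¹)) r := by
      rw [hue]; exact hcomp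
    rw [this.deriv]
    field_simp
  -- main identity
  have hmain : ∀ r ∈ Set.Ioo (0:ℝ) R,
      2 * Real.exp (2 * u r) * (-(deriv (deriv f) r) / f r - (deriv u r) ^ 2)
        = (2 / (r ^ 2 * w r ^ (2 + 2 * c2))) *
            (c1 * (c1 + 2) / (w r - c1) + c1 - c2 ^ 2) := by
    intro r hr
    obtain ⟨h1, h2⟩ := hfacts r hr
    have hr0 : (0:ℝ) < r := hr.1
    have hl0 : Real.log r ≠ 0 := by nlinarith
    have hW : (0:ℝ) < -Real.log r := by linarith
    have hplus : Real.log r + c1 ≠ 0 := by nlinarith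
    rw [hd2f r hr, hdu r hr, hu r, hwneg r, hfe]
    have hexp : Real.exp (2 * (-c2 * Real.log (-Real.log r)))
        = ((-Real.log r) ^ (2 * c2 : ℝ))⁻¹ := by
      rw [← Real.rpow_neg hW.le, Real.rpow_def_of_pos hW]
      ring_nf
    have hpow : (-Real.log r) ^ (2 + 2 * c2 : ℝ)
        = (-Real.log r) ^ 2 * (-Real.log r) ^ (2 * c2 : ℝ) := by
      rw [Real.rpow_add hW, Real.rpow_two]
    rw [hexp, hpow]
    have hP : (0:ℝ) < (-Real.log r) ^ (2 * c2 : ℝ) :=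
      Real.rpow_pos_of_pos hW _
    have hm : -Real.log r - c1 ≠ 0 := by nlinarith
    field_simp [hm]
    ring
  refine ⟨hmain, fun hge r hr => ?_⟩
  rw [hmain r hr]
  obtain ⟨h1, h2⟩ := hfacts r hr
  have hr0 : (0:ℝ) < r := hr.1
  have hW : (0:ℝ) < -Real.log r := by linarith
  have hWc : (0:ℝ) < w r - c1 := by rw [hwneg]; linarith
  have hB : 0 < c1 * (c1 + 2) / (w r - c1) + c1 - c2 ^ 2 := by
    have : 0 < c1 * (c1 + 2) / (w r - c1) := div_pos (by positivity) hWc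
    linarith
  have hpre : 0 < 2 / (r ^ 2 * w r ^ (2 + 2 * c2)) := by
    have : (0:ℝ) < w r ^ (2 + 2 * c2 : ℝ) := by
      rw [hwneg]; exact Real.rpow_pos_of_pos hW _
    positivity
  exact mul_pos hpre hB
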